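/- Let C be a cartesian monoidal category, i.e. a category with finite products regarded as a monoidal category with tensor the binary product A ⨯ B and unit the terminal object ⊤. Then the product functor C × C ⥤ C, (A, B) ↦ A ⨯ B, admits a right adjoint if and only if C has finite biproducts in the following sense: the terminal object ⊤ is initial, and for all objects A, B the binary product A ⨯ B, equipped with the coprojections j₁ := ⟨𝟙_A, !_A ≫ ¡_B⟩ : A ⟶ A ⨯ B and j₂ := ⟨!_B ≫ ¡_A, 𝟙_B⟩ : B ⟶ A ⨯ B (where !_X : X ⟶ ⊤ is the terminal map and ¡_X : ⊤ ⟶ X is the unique map from the initial object ⊤, and ⟨f, g⟩ denotes the pairing into the product), is a binary coproduct of A and B. -/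

import Mathlib

open CategoryTheory CategoryTheory.Limits CategoryTheory.MonoidalCategory

attribute [local instance] CategoryTheory.CartesianMonoidalCategory.ofHasFiniteProducts

noncomputable section ProofAux

namespace ProofAux

variable {C : Type*} [Category C] [HasFiniteProducts C]

theorem tensor_map_eq {AB' AB : C × C} (u : AB' ⟶ AB) :
    (MonoidalCategory.tensor C).map u = prod.map u.1 u.2 := by
  apply Limits.prod.hom_ext
  · exact (BinaryFan.IsLimit.lift' _ _ _).2.1.trans (prod.map_fst u.1 u.2).symm
  · exact (BinaryFan.IsLimit.lift' _ _ _).2.2.trans (prod.map_snd u.1 u.2).symm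

section Forward

variable {G : C ⥤ C × C} (adj : MonoidalCategory.tensor C ⊣ G)

/-- The hom-equivalence of the adjunction, unfolded into components. -/
def e (A B X : C) : (A ⨯ B ⟶ X) ≃ ((A ⟶ (G.obj X).1) × (B ⟶ (G.obj X).2)) :=
  adj.homEquiv (A, B) X

theorem e_nat1 {A B A' B' X : C} (u : A' ⟶ A) (v : B' ⟶ B) (g : A ⨯ B ⟶ X) :
    (e adj A' B' X (prod.map u v ≫ g)).1 = u ≫ (e adj A B X g).1 := by
  have hm : (MonoidalCategory.tensor C).map ((u, v) : ((A', B') : C × C) ⟶ (A, B)) = prod.map u v := by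
    exact tensor_map_eq _
  have h := congrArg Prod.fst (adj.homEquiv_naturality_left ((u, v) : ((A', B') : C × C) ⟶ (A, B)) g)
  rw [hm] at h
  exact h

theorem e_nat2 {A B A' B' X : C} (u : A' ⟶ A) (v : B' ⟶ B) (g : A ⨯ B ⟶ X) :
    (e adj A' B' X (prod.map u v ≫ g)).2 = v ≫ (e adj A B X g).2 := by
  have hm : (MonoidalCategory.tensor C).map ((u, v) : ((A', B') : C × C) ⟶ (A, B)) = prod.map u v := by
    exact tensor_map_eq _
  have h := congrArg Prod.snd (adj.homEquiv_naturality_left ((u, v) : ((A', B') : C × C) ⟶ (A, B)) g)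
  rw [hm] at h
  exact h

/-- The second component of `e` is constant on maps out of `A ⨯ ⊤`. -/
theorem snd_const {X A : C} (g : A ⨯ ⊤_ C ⟶ X) :
    (e adj A (⊤_ C) X g).2 = (e adj X (⊤_ C) X prod.fst).2 := by
  have hg : prod.map (prod.lift (𝟙 A) (terminal.from A) ≫ g) (𝟙 (⊤_ C)) ≫
      (prod.fst : X ⨯ ⊤_ C ⟶ X) = g := by
    rw [prod.map_fst]
    have h1 : (prod.fst : A ⨯ ⊤_ C ⟶ A) ≫ prod.lift (𝟙 A) (terminal.from A) = 𝟙 _ := by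
      apply Limits.prod.hom_ext
      · simp [prod.lift_fst]
      · simp only [Category.assoc, prod.lift_snd, Category.id_comp]
        exact terminal.hom_ext _ _
    rw [← Category.assoc, h1, Category.id_comp]
  calc (e adj A (⊤_ C) X g).2
      = (e adj A (⊤_ C) X (prod.map (prod.lift (𝟙 A) (terminal.from A) ≫ g) (𝟙 (⊤_ C)) ≫
          prod.fst)).2 := by rw [hg]
    _ = 𝟙 (⊤_ C) ≫ (e adj X (⊤_ C) X prod.fst).2 := e_nat2 adj _ _ _
    _ = (e adj X (⊤_ C) X prod.fst).2 := Category.id_comp _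

/-- The first component of `e` is constant on maps out of `⊤ ⨯ B`. -/
theorem fst_const {X B : C} (g : (⊤_ C) ⨯ B ⟶ X) :
    (e adj (⊤_ C) B X g).1 = (e adj (⊤_ C) X X prod.snd).1 := by
  have hg : prod.map (𝟙 (⊤_ C)) (prod.lift (terminal.from B) (𝟙 B) ≫ g) ≫
      (prod.snd : (⊤_ C) ⨯ X ⟶ X) = g := by
    rw [prod.map_snd]
    have h1 : (prod.snd : (⊤_ C) ⨯ B ⟶ B) ≫ prod.lift (terminal.from B) (𝟙 B) = 𝟙 _ := by
      apply Limits.prod.hom_ext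
      · simp only [Category.assoc, prod.lift_fst, Category.id_comp]
        exact terminal.hom_ext _ _
      · simp [prod.lift_snd]
    rw [← Category.assoc, h1, Category.id_comp]
  calc (e adj (⊤_ C) B X g).1
      = (e adj (⊤_ C) B X (prod.map (𝟙 (⊤_ C)) (prod.lift (terminal.from B) (𝟙 B) ≫ g) ≫
          prod.snd)).1 := by rw [hg]
    _ = 𝟙 (⊤_ C) ≫ (e adj (⊤_ C) X X prod.snd).1 := e_nat1 adj _ _ _
    _ = (e adj (⊤_ C) X X prod.snd).1 := Category.id_comp _

include adj in
theorem sub2 (X : C) (k k' : ⊤_ C ⟶ (G.obj X).2) : k = k' := by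
  have key : ∀ k : ⊤_ C ⟶ (G.obj X).2, k = (e adj X (⊤_ C) X prod.fst).2 := by
    intro k
    have := snd_const adj ((e adj (G.obj X).1 (⊤_ C) X).symm (𝟙 (G.obj X).1, k))
    rwa [Equiv.apply_symm_apply] at this
  rw [key k, key k']

include adj in
theorem sub1 (X : C) (k k' : ⊤_ C ⟶ (G.obj X).1) : k = k' := by
  have key : ∀ k : ⊤_ C ⟶ (G.obj X).1, k = (e adj (⊤_ C) X X prod.snd).1 := by
    intro k
    have := fst_const adj ((e adj (⊤_ C) (G.obj X).2 X).symm (k, 𝟙 (G.obj X).2))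
    rwa [Equiv.apply_symm_apply] at this
  rw [key k, key k']

include adj in
/-- Any two maps out of the terminal object are equal. -/
theorem top_hom_eq {X : C} (t s : ⊤_ C ⟶ X) : t = s := by
  have h : (prod.fst : (⊤_ C) ⨯ ⊤_ C ⟶ ⊤_ C) ≫ t = prod.fst ≫ s := by
    apply (e adj (⊤_ C) (⊤_ C) X).injective
    exact Prod.ext (sub1 adj X _ _) (sub2 adj X _ _)
  calc t = prod.lift (𝟙 _) (𝟙 _) ≫ (prod.fst : (⊤_ C) ⨯ ⊤_ C ⟶ ⊤_ C) ≫ t := by simp [prod.lift_fst_assoc]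
    _ = prod.lift (𝟙 _) (𝟙 _) ≫ (prod.fst : (⊤_ C) ⨯ ⊤_ C ⟶ ⊤_ C) ≫ s := by rw [h]
    _ = s := by simp [prod.lift_fst_assoc]

/-- If the tensor functor has a right adjoint, the terminal object is initial. -/
def isInitialTop : IsInitial (⊤_ C) :=
  IsInitial.ofUniqueHom
    (fun X => prod.lift (𝟙 _) (𝟙 _) ≫
      (e adj (⊤_ C) (⊤_ C) X).symm
        ((e adj (⊤_ C) X X prod.snd).1, (e adj X (⊤_ C) X prod.fst).2))
    (fun X m => top_hom_eq adj m _)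

section Colimit

variable (hI : IsInitial (⊤_ C)) (A B : C)

theorem fst_j₁ : (prod.fst : A ⨯ ⊤_ C ⟶ A) ≫ prod.lift (𝟙 A) (terminal.from A ≫ hI.to B) =
    prod.map (𝟙 A) (hI.to B) := by
  apply Limits.prod.hom_ext
  · simp [prod.lift_fst]
  · simp only [Category.assoc, prod.lift_snd, prod.map_snd]
    rw [← Category.assoc]
    congr 1
    exact terminal.hom_ext _ _

theorem snd_j₂ : (prod.snd : (⊤_ C) ⨯ B ⟶ B) ≫ prod.lift (terminal.from B ≫ hI.to A) (𝟙 B) =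
    prod.map (hI.to A) (𝟙 B) := by
  apply Limits.prod.hom_ext
  · simp only [Category.assoc, prod.lift_fst, prod.map_fst]
    rw [← Category.assoc]
    congr 1
    exact terminal.hom_ext _ _
  · simp [prod.lift_snd]

theorem fac₁ {T : C} (f : A ⟶ T) (g : B ⟶ T) :
    prod.lift (𝟙 A) (terminal.from A ≫ hI.to B) ≫ (e adj A B T).symm
      ((e adj A (⊤_ C) T ((prod.fst : A ⨯ ⊤_ C ⟶ A) ≫ f)).1,
       (e adj (⊤_ C) B T ((prod.snd : (⊤_ C) ⨯ B ⟶ B) ≫ g)).2) = f := by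
  set d := (e adj A B T).symm
      ((e adj A (⊤_ C) T ((prod.fst : A ⨯ ⊤_ C ⟶ A) ≫ f)).1,
       (e adj (⊤_ C) B T ((prod.snd : (⊤_ C) ⨯ B ⟶ B) ≫ g)).2) with hd
  have h : (prod.fst : A ⨯ ⊤_ C ⟶ A) ≫
      (prod.lift (𝟙 A) (terminal.from A ≫ hI.to B) ≫ d) = prod.fst ≫ f := by
    rw [← Category.assoc, fst_j₁ hI A B]
    apply (e adj A (⊤_ C) T).injective
    refine Prod.ext ?_ (sub2 adj T _ _)
    rw [e_nat1, hd, Equiv.apply_symm_apply, Category.id_comp]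
  have h2 := congrArg (fun x => prod.lift (𝟙 A) (terminal.from A) ≫ x) h
  simp only [← Category.assoc, prod.lift_fst, Category.id_comp] at h2
  exact h2

theorem fac₂ {T : C} (f : A ⟶ T) (g : B ⟶ T) :
    prod.lift (terminal.from B ≫ hI.to A) (𝟙 B) ≫ (e adj A B T).symm
      ((e adj A (⊤_ C) T ((prod.fst : A ⨯ ⊤_ C ⟶ A) ≫ f)).1,
       (e adj (⊤_ C) B T ((prod.snd : (⊤_ C) ⨯ B ⟶ B) ≫ g)).2) = g := by
  set d := (e adj A B T).symm
      ((e adj A (⊤_ C) T ((prod.fst : A ⨯ ⊤_ C ⟶ A) ≫ f)).1,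
       (e adj (⊤_ C) B T ((prod.snd : (⊤_ C) ⨯ B ⟶ B) ≫ g)).2) with hd
  have h : (prod.snd : (⊤_ C) ⨯ B ⟶ B) ≫
      (prod.lift (terminal.from B ≫ hI.to A) (𝟙 B) ≫ d) = prod.snd ≫ g := by
    rw [← Category.assoc, snd_j₂ hI A B]
    apply (e adj (⊤_ C) B T).injective
    refine Prod.ext (sub1 adj T _ _) ?_
    rw [e_nat2, hd, Equiv.apply_symm_apply, Category.id_comp]
  have h2 := congrArg (fun x => prod.lift (terminal.from B) (𝟙 B) ≫ x) h
  simp only [← Category.assoc, prod.lift_snd, Category.id_comp] at h2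
  exact h2

theorem uniq₀ {T : C} (f : A ⟶ T) (g : B ⟶ T) (m : A ⨯ B ⟶ T)
    (hl : prod.lift (𝟙 A) (terminal.from A ≫ hI.to B) ≫ m = f)
    (hr : prod.lift (terminal.from B ≫ hI.to A) (𝟙 B) ≫ m = g) :
    m = (e adj A B T).symm
      ((e adj A (⊤_ C) T ((prod.fst : A ⨯ ⊤_ C ⟶ A) ≫ f)).1,
       (e adj (⊤_ C) B T ((prod.snd : (⊤_ C) ⨯ B ⟶ B) ≫ g)).2) := by
  apply (e adj A B T).injective
  rw [Equiv.apply_symm_apply]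
  refine Prod.ext ?_ ?_
  · have hf : (prod.fst : A ⨯ ⊤_ C ⟶ A) ≫ f = prod.map (𝟙 A) (hI.to B) ≫ m := by
      rw [← hl, ← Category.assoc, fst_j₁ hI A B]
    rw [hf, e_nat1, Category.id_comp]
  · have hg : (prod.snd : (⊤_ C) ⨯ B ⟶ B) ≫ g = prod.map (hI.to A) (𝟙 B) ≫ m := by
      rw [← hr, ← Category.assoc, snd_j₂ hI A B]
    rw [hg, e_nat2, Category.id_comp]

/-- If the tensor functor has a right adjoint, products are coproducts. -/
def isColimitCofan : IsColimit (BinaryCofan.mk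
    (prod.lift (𝟙 A) (terminal.from A ≫ hI.to B))
    (prod.lift (terminal.from B ≫ hI.to A) (𝟙 B))) :=
  BinaryCofan.IsColimit.mk _
    (fun {T} f g => (e adj A B T).symm
      ((e adj A (⊤_ C) T ((prod.fst : A ⨯ ⊤_ C ⟶ A) ≫ f)).1,
       (e adj (⊤_ C) B T ((prod.snd : (⊤_ C) ⨯ B ⟶ B) ≫ g)).2))
    (fun {T} f g => fac₁ adj hI A B f g)
    (fun {T} f g => fac₂ adj hI A B f g)
    (fun {T} f g m hl hr => uniq₀ adj hI A B f g m hl hr)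

end Colimit

end Forward

section Converse

variable (hI : IsInitial (⊤_ C))
variable (hc : ∀ A B : C, IsColimit (BinaryCofan.mk
    (prod.lift (𝟙 A) (terminal.from A ≫ hI.to B))
    (prod.lift (terminal.from B ≫ hI.to A) (𝟙 B))))

theorem j₁_map {A B A' B' : C} (u : A' ⟶ A) (v : B' ⟶ B) :
    prod.lift (𝟙 A') (terminal.from A' ≫ hI.to B') ≫ prod.map u v =
      u ≫ prod.lift (𝟙 A) (terminal.from A ≫ hI.to B) := by
  apply Limits.prod.hom_ext
  · simp
  · simp only [Category.assoc, prod.lift_snd, prod.map_snd, prod.lift_map]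
    rw [← Category.assoc u, ← Category.assoc (terminal.from A')]
    rw [show u ≫ terminal.from A = terminal.from A' from terminal.hom_ext _ _]
    rw [Category.assoc]
    congr 1
    exact hI.hom_ext _ _

theorem j₂_map {A B A' B' : C} (u : A' ⟶ A) (v : B' ⟶ B) :
    prod.lift (terminal.from B' ≫ hI.to A') (𝟙 B') ≫ prod.map u v =
      v ≫ prod.lift (terminal.from B ≫ hI.to A) (𝟙 B) := by
  apply Limits.prod.hom_ext
  · simp only [Category.assoc, prod.lift_fst, prod.map_fst, prod.lift_map]
    rw [← Category.assoc v, ← Category.assoc (terminal.from B')]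
    rw [show v ≫ terminal.from B = terminal.from B' from terminal.hom_ext _ _]
    rw [Category.assoc]
    congr 1
    exact hI.hom_ext _ _
  · simp

theorem inl_desc (A B : C) {T : C} (f : A ⟶ T) (g : B ⟶ T) :
    prod.lift (𝟙 A) (terminal.from A ≫ hI.to B) ≫
      (hc A B).desc (BinaryCofan.mk f g) = f := by
  have := (hc A B).fac (BinaryCofan.mk f g) ⟨WalkingPair.left⟩
  exact this

theorem inr_desc (A B : C) {T : C} (f : A ⟶ T) (g : B ⟶ T) :
    prod.lift (terminal.from B ≫ hI.to A) (𝟙 B) ≫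
      (hc A B).desc (BinaryCofan.mk f g) = g := by
  have := (hc A B).fac (BinaryCofan.mk f g) ⟨WalkingPair.right⟩
  exact this

/-- The adjunction between the product functor and the diagonal, given biproducts. -/
def adjOfBiproducts : MonoidalCategory.tensor C ⊣ Functor.diag C :=
  Adjunction.mkOfHomEquiv
    { homEquiv := fun AB X =>
        { toFun := fun f =>
            (prod.lift (𝟙 AB.1) (terminal.from AB.1 ≫ hI.to AB.2) ≫ f,
             prod.lift (terminal.from AB.2 ≫ hI.to AB.1) (𝟙 AB.2) ≫ f)
          invFun := fun p => (hc AB.1 AB.2).desc (BinaryCofan.mk p.1 p.2)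
          left_inv := fun f => by
            apply BinaryCofan.IsColimit.hom_ext (hc AB.1 AB.2)
            · exact inl_desc hI hc AB.1 AB.2 _ _
            · exact inr_desc hI hc AB.1 AB.2 _ _
          right_inv := fun p => by
            refine Prod.ext ?_ ?_
            · exact inl_desc hI hc AB.1 AB.2 p.1 p.2
            · exact inr_desc hI hc AB.1 AB.2 p.1 p.2 }
      homEquiv_naturality_left_symm := by
        intro AB' AB X u p
        apply BinaryCofan.IsColimit.hom_ext (hc AB'.1 AB'.2)
        · show prod.lift (𝟙 AB'.1) (terminal.from AB'.1 ≫ hI.to AB'.2) ≫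
              (hc AB'.1 AB'.2).desc (BinaryCofan.mk (u ≫ p).1 (u ≫ p).2) =
            prod.lift (𝟙 AB'.1) (terminal.from AB'.1 ≫ hI.to AB'.2) ≫
              (MonoidalCategory.tensor C).map u ≫ (hc AB.1 AB.2).desc (BinaryCofan.mk p.1 p.2)
          rw [inl_desc hI hc AB'.1 AB'.2 (u ≫ p).1 (u ≫ p).2, tensor_map_eq]
          erw [← Category.assoc, j₁_map hI u.1 u.2, Category.assoc,
            inl_desc hI hc AB.1 AB.2 p.1 p.2]
          rfl
        · show prod.lift (terminal.from AB'.2 ≫ hI.to AB'.1) (𝟙 AB'.2) ≫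
              (hc AB'.1 AB'.2).desc (BinaryCofan.mk (u ≫ p).1 (u ≫ p).2) =
            prod.lift (terminal.from AB'.2 ≫ hI.to AB'.1) (𝟙 AB'.2) ≫
              (MonoidalCategory.tensor C).map u ≫ (hc AB.1 AB.2).desc (BinaryCofan.mk p.1 p.2)
          rw [inr_desc hI hc AB'.1 AB'.2 (u ≫ p).1 (u ≫ p).2, tensor_map_eq]
          erw [← Category.assoc, j₂_map hI u.1 u.2, Category.assoc,
            inr_desc hI hc AB.1 AB.2 p.1 p.2]
          rfl
      homEquiv_naturality_right := by
        intro AB X X' f g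
        refine Prod.ext ?_ ?_ <;> exact (Category.assoc _ _ _).symm }

end Converse

end ProofAux

end ProofAux

/-- In a cartesian monoidal category, the product functor `C × C ⥤ C` admits a right
adjoint iff `C` has finite biproducts: the terminal object is initial, and for all `A, B`
the product `A ⨯ B`, equipped with the canonical coprojections, is a binary coproduct. -/
theorem prodFunctor_isLeftAdjoint_iff_biproducts {C : Type*} [Category C]
    [HasFiniteProducts C] :
    (MonoidalCategory.tensor C).IsLeftAdjoint ↔
      ∃ hI : IsInitial (⊤_ C),
        ∀ A B : C, Nonempty (IsColimit (BinaryCofan.mk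
          (prod.lift (𝟙 A) (terminal.from A ≫ hI.to B))
          (prod.lift (terminal.from B ≫ hI.to A) (𝟙 B)))) := by
  constructor
  · rintro ⟨G, ⟨adj⟩⟩
    exact ⟨ProofAux.isInitialTop adj,
      fun A B => ⟨ProofAux.isColimitCofan adj (ProofAux.isInitialTop adj) A B⟩⟩
  · rintro ⟨hI, hc⟩
    exact (ProofAux.adjOfBiproducts hI (fun A B => (hc A B).some)).isLeftAdjoint
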